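/- Fix g ≥ 1 and let M = Λ*(V) ⊗_ℤ T with the operators U and D_γ (γ ∈ V) described below. For every integer i ≥ 1, the kernel M_i of U^i : M → M equals the smallest additive subgroup of M that contains the element (e₁∧f₁∧⋯∧e_g∧f_g) ⊗ U^{−(i−1)} and is closed under the action of U and of D_γ for every γ ∈ V. In other words, the top summand Λ^{2g}(V) ⊗ U^{−(i−1)} generates M_i as a module over the ring generated by U and the operators D_γ. -/

import Mathlib

noncomputable section

/-- Basis elements of `Λ*(R^{2g}) ⊗ T`: a subset `S ⊆ {1,…,2g}` (the wedge of the
corresponding basis vectors) and `j ∈ ℕ` (the factor `U^{-j}`). -/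
abbrev BIdx (g : ℕ) : Type := Finset (Fin (2 * g)) × ℕ

/-- The module `M = Λ*(V) ⊗ T`, with `V` free of rank `2g` over `R`,
modelled as finitely supported families of coefficients on the basis. -/
abbrev MM (R : Type) [CommRing R] (g : ℕ) : Type := BIdx g →₀ R

variable (R : Type) [CommRing R]

/-- The Koszul sign `(-1)^{#{a ∈ S | a < b}}` for inserting/removing `b` in `S`. -/
def sgnCoef {g : ℕ} (b : Fin (2 * g)) (S : Finset (Fin (2 * g))) : R :=
  (-1) ^ (S.filter fun a => a < b).card

/-- The standard symplectic form on the basis: `ω(e_i, f_i) = 1 = -ω(f_i, e_i)`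
(with `e_i` the first `g` basis vectors and `f_i` the last `g`). -/
def omg {g : ℕ} (a b : Fin (2 * g)) : R :=
  if a.1 < g ∧ b.1 = a.1 + g then 1 else if b.1 < g ∧ a.1 = b.1 + g then -1 else 0

/-- The `U`-action on `M = Λ*(V) ⊗ T`, acting on the second factor. -/
def Uop (g : ℕ) : AddMonoid.End (MM R g) :=
  Finsupp.liftAddHom fun p =>
    if p.2 = 0 then 0 else Finsupp.singleAddHom (p.1, p.2 - 1)

/-- The operator `D_γ(x ⊗ t) = ι_{ω(γ,·)}(x) ⊗ t + (γ ∧ x) ⊗ U·t` for `γ ∈ V`. -/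
def Dop (g : ℕ) (γ : Fin (2 * g) → R) : AddMonoid.End (MM R g) :=
  Finsupp.liftAddHom fun p =>
    (∑ b ∈ p.1,
      (Finsupp.singleAddHom (p.1.erase b, p.2)).comp
        (AddMonoidHom.mulLeft (sgnCoef R b p.1 * ∑ a, γ a * omg R a b))) +
    (∑ b : Fin (2 * g),
      if b ∈ p.1 then 0
      else if p.2 = 0 then 0
      else (Finsupp.singleAddHom (insert b p.1, p.2 - 1)).comp
        (AddMonoidHom.mulLeft (γ b * sgnCoef R b p.1)))

/-- The homogeneous component `M^{(d)}`: the set of elements supported on basis elements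
`(S, j)` with `#S + 2j = d`. -/
def homogSet (g : ℕ) (d : ℕ) : Set (MM R g) :=
  {x | ∀ p ∈ x.support, p.1.card + 2 * p.2 = d}

namespace Aux
variable {g : ℕ}

lemma Uop_single (T : Finset (Fin (2*g))) (k : ℕ) (r : ℤ) :
    Uop ℤ g (Finsupp.single (T, k) r) =
      if k = 0 then 0 else Finsupp.single (T, k - 1) r := by
  rw [Uop]; erw [Finsupp.liftAddHom_apply_single]
  split_ifs with h <;> simp

lemma Uop_apply (x : MM ℤ g) (S : Finset (Fin (2*g))) (j : ℕ) :
    Uop ℤ g x (S, j) = x (S, j + 1) := by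
  induction x using Finsupp.induction_linear with
  | zero => simp
  | add f h hf hh => simp only [map_add, Finsupp.add_apply, hf, hh]
  | single p r =>
      obtain ⟨T, k⟩ := p
      rw [Uop_single]
      match k with
      | 0 => simp [Finsupp.single_apply, Prod.ext_iff]
      | (n+1) => simp [Finsupp.single_apply, Prod.ext_iff]

lemma Uop_pow_apply (n : ℕ) (x : MM ℤ g) (S : Finset (Fin (2*g))) (j : ℕ) :
    ((Uop ℤ g ^ n) x) (S, j) = x (S, j + n) := by
  induction n generalizing x with
  | zero => simp
  | succ n ih =>
      rw [pow_succ]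
      show ((Uop ℤ g ^ n) (Uop ℤ g x)) (S, j) = _
      rw [ih, Uop_apply, add_assoc]


def Kgood (g i : ℕ) : AddSubgroup (MM ℤ g) where
  carrier := {x | ∀ S j, x (S, j + i) = 0}
  add_mem' := by
    intro a b ha hb S j
    simp [Finsupp.add_apply, ha S j, hb S j]
  zero_mem' := by intro S j; simp
  neg_mem' := by
    intro a ha S j
    simp [Finsupp.neg_apply, ha S j]

lemma mem_Kgood {i : ℕ} {x : MM ℤ g} : x ∈ Kgood g i ↔ ∀ S j, x (S, j + i) = 0 := Iff.rfl

lemma ker_eq_Kgood (i : ℕ) :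
    AddMonoidHom.ker ((Uop ℤ g ^ i : AddMonoid.End (MM ℤ g)) : MM ℤ g →+ MM ℤ g) = Kgood g i := by
  ext x
  rw [mem_Kgood]; change (Uop ℤ g ^ i) x = 0 ↔ _
  constructor
  · intro h S j
    rw [← Uop_pow_apply i x S j]
    show ((Uop ℤ g ^ i) x) (S, j) = 0
    rw [h]; rfl
  · intro h
    ext p
    obtain ⟨S, j⟩ := p
    show ((Uop ℤ g ^ i) x) (S, j) = 0
    rw [Uop_pow_apply, h]

lemma mem_Kgood_single {i : ℕ} {q : BIdx g} (hq : q.2 < i) (r : ℤ) :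
    Finsupp.single q r ∈ Kgood g i := by
  intro S j
  rw [Finsupp.single_apply, if_neg]
  intro h
  have := congrArg Prod.snd h
  simp only at this
  omega

lemma Uop_mem_Kgood {i : ℕ} {x : MM ℤ g} (hx : x ∈ Kgood g i) : Uop ℤ g x ∈ Kgood g i := by
  intro S j
  rw [Uop_apply]
  have h2 : j + i + 1 = (j + 1) + i := by omega
  rw [h2]
  exact hx S (j + 1)

lemma Dop_single (γ : Fin (2*g) → ℤ) (p : BIdx g) (r : ℤ) :
    Dop ℤ g γ (Finsupp.single p r) =
      (∑ c ∈ p.1, Finsupp.single (p.1.erase c, p.2)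
          ((sgnCoef ℤ c p.1 * ∑ a, γ a * omg ℤ a c) * r)) +
      (∑ c : Fin (2 * g), if c ∈ p.1 then 0 else if p.2 = 0 then 0
        else Finsupp.single (insert c p.1, p.2 - 1) ((γ c * sgnCoef ℤ c p.1) * r)) := by
  rw [Dop]; erw [Finsupp.liftAddHom_apply_single]
  rw [AddMonoidHom.add_apply, AddMonoidHom.finset_sum_apply, AddMonoidHom.finset_sum_apply]
  have h1 : (∑ c ∈ p.1,
      ((Finsupp.singleAddHom (p.1.erase c, p.2)).comp
        (AddMonoidHom.mulLeft (sgnCoef ℤ c p.1 * ∑ a, γ a * omg ℤ a c))) r)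
      = (∑ c ∈ p.1, Finsupp.single (p.1.erase c, p.2)
          ((sgnCoef ℤ c p.1 * ∑ a, γ a * omg ℤ a c) * r)) :=
    Finset.sum_congr rfl fun c hc => rfl
  have h2 : (∑ c : Fin (2 * g),
      (if c ∈ p.1 then 0 else if p.2 = 0 then 0
        else (Finsupp.singleAddHom (insert c p.1, p.2 - 1)).comp
          (AddMonoidHom.mulLeft (γ c * sgnCoef ℤ c p.1))) r)
      = (∑ c : Fin (2 * g), if c ∈ p.1 then 0 else if p.2 = 0 then 0
        else Finsupp.single (insert c p.1, p.2 - 1) ((γ c * sgnCoef ℤ c p.1) * r)) := by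
    refine Finset.sum_congr rfl fun c hc => ?_
    by_cases hc1 : c ∈ p.1
    · simp [hc1]
    · by_cases hc2 : p.2 = 0
      · simp [hc1, hc2]
      · simp only [hc1, hc2, if_false]
        rfl
  rw [h1, h2]


lemma Dop_mem_Kgood {i : ℕ} (γ : Fin (2*g) → ℤ) {x : MM ℤ g} (hx : x ∈ Kgood g i) :
    Dop ℤ g γ x ∈ Kgood g i := by
  have hx2 : ∀ p ∈ x.support, p.2 < i := by
    intro p hp
    by_contra hge
    push_neg at hge
    have h0 : x (p.1, (p.2 - i) + i) = 0 := hx p.1 (p.2 - i)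
    have hpe : (p.1, (p.2 - i) + i) = p := by
      obtain ⟨a, b⟩ := p
      simp only [Prod.mk.injEq, true_and]
      omega
    rw [hpe] at h0
    exact (Finsupp.mem_support_iff.mp hp) h0
  rw [← Finsupp.sum_single x, map_finsuppSum]
  refine AddSubgroup.sum_mem _ fun p hp => ?_
  have hpi : p.2 < i := hx2 p hp
  show Dop ℤ g γ (Finsupp.single p (x p)) ∈ Kgood g i
  rw [Dop_single]
  refine AddSubgroup.add_mem _ (AddSubgroup.sum_mem _ fun c hc => ?_)
    (AddSubgroup.sum_mem _ fun c hc => ?_)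
  · exact mem_Kgood_single (q := (p.1.erase c, p.2)) hpi _
  · by_cases hc1 : c ∈ p.1
    · simp only [hc1, if_true]; exact zero_mem _
    · by_cases hc2 : p.2 = 0
      · simp only [hc1, hc2, if_false, if_true]; exact zero_mem _
      · simp only [hc1, hc2, if_false]
        exact mem_Kgood_single (q := (insert c p.1, p.2 - 1)) (by simp only; omega) _

def pr {g : ℕ} (b : Fin (2*g)) : Fin (2*g) :=
  if h : b.1 < g then ⟨b.1 + g, by omega⟩
  else ⟨b.1 - g, by have := b.isLt; omega⟩

lemma pr_ne {g : ℕ} (hg : 1 ≤ g) (b : Fin (2*g)) : pr b ≠ b := by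
  have hb := b.isLt
  unfold pr
  split_ifs with h <;>
    (intro he; apply_fun Fin.val at he; simp only at he; omega)

lemma omg_pr {g : ℕ} (b c : Fin (2*g)) :
    omg ℤ (pr b) c = if c = b then (if b.1 < g then (-1:ℤ) else 1) else 0 := by
  have hb := b.isLt
  have hc := c.isLt
  by_cases h : b.1 < g
  · rw [pr, dif_pos h]
    by_cases hcb : c = b
    · subst hcb
      rw [if_pos rfl, if_pos h, omg, if_neg (by simp only; omega), if_pos (by exact ⟨h, rfl⟩)]
    · rw [if_neg hcb, omg, if_neg (by simp only; omega), if_neg]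
      rintro ⟨h1, h2⟩
      simp only at h2
      exact hcb (Fin.ext (by omega))
  · rw [pr, dif_neg h]
    by_cases hcb : c = b
    · subst hcb
      rw [if_pos rfl, if_neg h, omg, if_pos (by simp only; constructor <;> omega)]
    · rw [if_neg hcb, omg, if_neg, if_neg]
      · rintro ⟨h1, h2⟩
        simp only at h1 h2
        omega
      · rintro ⟨h1, h2⟩
        simp only at h1 h2
        exact hcb (Fin.ext (by omega))

lemma sum_indic_omg {g : ℕ} (b c : Fin (2*g)) :
    (∑ a, (if a = pr b then (1:ℤ) else 0) * omg ℤ a c) = omg ℤ (pr b) c := by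
  simp [ite_mul]


lemma Dop_key {g : ℕ} {S : Finset (Fin (2*g))} {b : Fin (2*g)} (hb : b ∉ S) (j : ℕ) :
    ∃ ε : ℤ, ε * ε = 1 ∧
      Dop ℤ g (fun a => if a = pr b then (1:ℤ) else 0) (Finsupp.single (insert b S, j) 1)
        = Finsupp.single (S, j) ε +
          (if pr b ∈ insert b S then 0 else if j = 0 then 0
           else Finsupp.single (insert (pr b) (insert b S), j - 1)
             (sgnCoef ℤ (pr b) (insert b S))) := by
  set e : ℤ := if b.1 < g then (-1:ℤ) else 1 with he
  set s : ℤ := sgnCoef ℤ b (insert b S) with hs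
  refine ⟨s * e, ?_, ?_⟩
  · have h1 : s * s = 1 := by
      rw [hs, sgnCoef, ← pow_add]
      exact Even.neg_one_pow ⟨_, rfl⟩
    have h2 : e * e = 1 := by
      rw [he]; split_ifs <;> norm_num
    calc s * e * (s * e) = (s * s) * (e * e) := by ring
    _ = 1 := by rw [h1, h2, mul_one]
  · rw [Dop_single]
    have hcon : (∑ c ∈ (insert b S, j).1, Finsupp.single ((insert b S, j).1.erase c, (insert b S, j).2)
        ((sgnCoef ℤ c (insert b S, j).1 *
          ∑ a, (fun a => if a = pr b then (1:ℤ) else 0) a * omg ℤ a c) * 1))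
        = Finsupp.single (S, j) (s * e) := by
      rw [Finset.sum_eq_single_of_mem b (Finset.mem_insert_self b S)]
      · simp only
        rw [sum_indic_omg, omg_pr, if_pos rfl, Finset.erase_insert hb, mul_one, ← he, ← hs]
      · intro c hc hcb
        simp only
        rw [sum_indic_omg, omg_pr, if_neg hcb]
        simp
    have hw : (∑ c : Fin (2*g), if c ∈ (insert b S, j).1 then 0 else if (insert b S, j).2 = 0 then 0
        else Finsupp.single (insert c (insert b S, j).1, (insert b S, j).2 - 1)
          (((fun a => if a = pr b then (1:ℤ) else 0) c * sgnCoef ℤ c (insert b S, j).1) * 1))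
        = (if pr b ∈ insert b S then 0 else if j = 0 then 0
          else Finsupp.single (insert (pr b) (insert b S), j - 1)
            (sgnCoef ℤ (pr b) (insert b S))) := by
      rw [Finset.sum_eq_single_of_mem (pr b) (Finset.mem_univ _)]
      · by_cases h1 : pr b ∈ insert b S
        · simp [h1]
        · by_cases h2 : j = 0 <;> simp [h1, h2]
      · intro c hc hcb
        simp [hcb]
    rw [hcon, hw]


lemma single_coef_mem {g : ℕ} {H : AddSubgroup (MM ℤ g)} {p : BIdx g}
    (h : Finsupp.single p (1:ℤ) ∈ H) (c : ℤ) : Finsupp.single p c ∈ H := by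
  have := AddSubgroup.zsmul_mem H h c
  rwa [Finsupp.smul_single, smul_eq_mul, mul_one] at this

lemma single_one_of_coef {g : ℕ} {H : AddSubgroup (MM ℤ g)} {p : BIdx g} {c : ℤ}
    (hc : c * c = 1) (h : Finsupp.single p c ∈ H) : Finsupp.single p (1:ℤ) ∈ H := by
  have := AddSubgroup.zsmul_mem H h c
  rwa [Finsupp.smul_single, smul_eq_mul, hc] at this

end Aux

/-- For `g ≥ 1` and `i ≥ 1`, the kernel `M_i` of `U^i` on `M = Λ*(ℤ^{2g}) ⊗ T` is the
smallest additive subgroup of `M` containing `(e₁∧f₁∧⋯∧e_g∧f_g) ⊗ U^{−(i−1)}` and closed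
under `U` and under `D_γ` for every `γ ∈ V`. -/
theorem stmt12 (g : ℕ) (hg : 1 ≤ g) (i : ℕ) (hi : 1 ≤ i) :
    AddMonoidHom.ker ((Uop ℤ g ^ i : AddMonoid.End (MM ℤ g)) : MM ℤ g →+ MM ℤ g) =
      sInf {H : AddSubgroup (MM ℤ g) |
        Finsupp.single ((Finset.univ : Finset (Fin (2 * g))), i - 1) (1 : ℤ) ∈ H ∧
        (∀ x ∈ H, Uop ℤ g x ∈ H) ∧
        (∀ (γ : Fin (2 * g) → ℤ), ∀ x ∈ H, Dop ℤ g γ x ∈ H)} := by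
  rw [Aux.ker_eq_Kgood]
  apply le_antisymm
  · refine le_sInf fun H hH => ?_
    obtain ⟨h1, h2, h3⟩ := hH
    have key : ∀ k (S : Finset (Fin (2*g))) (j : ℕ), (Finset.univ \ S).card = k → j < i →
        Finsupp.single (S, j) (1:ℤ) ∈ H := by
      intro k
      induction k using Nat.strong_induction_on with
      | _ k ih =>
        intro S j hcard hj
        rcases Nat.eq_zero_or_pos k with hk0 | hkpos
        · subst hk0
          have hSuniv : S = Finset.univ := by
            have h0 : Finset.univ \ S = ∅ := Finset.card_eq_zero.mp hcard
            have h0' := Finset.sdiff_eq_empty_iff_subset.mp h0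
            exact (Finset.eq_univ_iff_forall.mpr fun a => h0' (Finset.mem_univ a))
          subst hSuniv
          have base : ∀ m, m < i →
              Finsupp.single ((Finset.univ : Finset (Fin (2*g))), i - 1 - m) (1:ℤ) ∈ H := by
            intro m
            induction m with
            | zero => intro _; simpa using h1
            | succ m ihm =>
              intro hm
              have hmem := h2 _ (ihm (by omega))
              rw [Aux.Uop_single, if_neg (by omega : ¬ (i - 1 - m = 0))] at hmem
              rwa [show i - 1 - m - 1 = i - 1 - (m+1) by omega] at hmem
          have hb := base (i - 1 - j) (by omega)
          rwa [show i - 1 - (i - 1 - j) = j by omega] at hb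
        · have hne : S ≠ Finset.univ := by
            intro h
            rw [h] at hcard
            simp at hcard
            omega
          obtain ⟨b, hb⟩ : ∃ b, b ∉ S := by
            by_contra hall
            push_neg at hall
            exact hne (Finset.eq_univ_iff_forall.mpr hall)
          have hbmem : b ∈ Finset.univ \ S := Finset.mem_sdiff.mpr ⟨Finset.mem_univ b, hb⟩
          have hcard1 : (Finset.univ \ insert b S).card = k - 1 := by
            rw [Finset.sdiff_insert, Finset.card_erase_of_mem hbmem, hcard]
          obtain ⟨ε, hε, hD⟩ := Aux.Dop_key (g := g) hb j
          have hins : Finsupp.single (insert b S, j) (1:ℤ) ∈ H :=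
            ih (k-1) (by omega) _ j hcard1 hj
          have hDmem : Dop ℤ g (fun a => if a = Aux.pr b then (1:ℤ) else 0)
              (Finsupp.single (insert b S, j) 1) ∈ H := h3 _ _ hins
          rw [hD] at hDmem
          have hW : (if Aux.pr b ∈ insert b S then 0 else if j = 0 then 0
              else Finsupp.single (insert (Aux.pr b) (insert b S), j - 1)
                (sgnCoef ℤ (Aux.pr b) (insert b S))) ∈ H := by
            by_cases hp1 : Aux.pr b ∈ insert b S
            · rw [if_pos hp1]; exact zero_mem _
            · rw [if_neg hp1]
              by_cases hj0 : j = 0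
              · rw [if_pos hj0]; exact zero_mem _
              · rw [if_neg hj0]
                have hp1' : Aux.pr b ∉ S := fun h => hp1 (Finset.mem_insert_of_mem h)
                have hpmem : Aux.pr b ∈ (Finset.univ \ S).erase b :=
                  Finset.mem_erase.mpr ⟨Aux.pr_ne hg b,
                    Finset.mem_sdiff.mpr ⟨Finset.mem_univ _, hp1'⟩⟩
                have hcard2 : (Finset.univ \ insert (Aux.pr b) (insert b S)).card = k - 2 := by
                  rw [Finset.sdiff_insert, Finset.sdiff_insert,
                    Finset.card_erase_of_mem hpmem, Finset.card_erase_of_mem hbmem, hcard]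
                  omega
                exact Aux.single_coef_mem
                  (ih (k-2) (by omega) _ (j-1) hcard2 (by omega)) _
          have hSmem : Finsupp.single (S, j) ε ∈ H := by
            have := AddSubgroup.sub_mem H hDmem hW
            simpa using this
          exact Aux.single_one_of_coef hε hSmem
    intro x hx
    have hx2 : ∀ p ∈ x.support, p.2 < i := by
      intro p hp
      by_contra hge
      push_neg at hge
      have h0 : x (p.1, (p.2 - i) + i) = 0 := hx p.1 (p.2 - i)
      have hpe : (p.1, (p.2 - i) + i) = p := by
        obtain ⟨a, c⟩ := p
        simp only [Prod.mk.injEq, true_and]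
        omega
      rw [hpe] at h0
      exact (Finsupp.mem_support_iff.mp hp) h0
    rw [← Finsupp.sum_single x]
    refine AddSubgroup.sum_mem _ fun p hp => ?_
    show Finsupp.single p (x p) ∈ H
    exact Aux.single_coef_mem (key _ p.1 p.2 rfl (hx2 p hp)) _
  · refine sInf_le ⟨?_, ?_, ?_⟩
    · exact Aux.mem_Kgood_single (q := (Finset.univ, i-1)) (by simp only; omega) 1
    · exact fun x hx => Aux.Uop_mem_Kgood hx
    · exact fun γ x hx => Aux.Dop_mem_Kgood γ hx
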